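/- Let A = U − V be a proper splitting of a group invertible real n×n matrix A. Then U is group invertible, AA# = UU#, and A#A = U#U. -/

import Mathlib

open Matrix

/-- `X` is the group inverse of `A`. -/
def IsGroupInv {n : ℕ} (A X : Matrix (Fin n) (Fin n) ℝ) : Prop :=
  A * X * A = A ∧ X * A * X = X ∧ A * X = X * A

/-- Spectral radius of a real matrix: sup of moduli of its complex eigenvalues. -/
noncomputable def specRad {n : ℕ} (A : Matrix (Fin n) (Fin n) ℝ) : ℝ :=
  sSup ((fun z : ℂ => ‖z‖) '' spectrum ℂ (A.map (algebraMap ℝ ℂ)))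

/-- `A = U - V` is a proper splitting: `R(U) = R(A)` and `N(U) = N(A)`. -/
def ProperSplitting {n : ℕ} (A U V : Matrix (Fin n) (Fin n) ℝ) : Prop :=
  A = U - V ∧ LinearMap.range U.mulVecLin = LinearMap.range A.mulVecLin ∧
    LinearMap.ker U.mulVecLin = LinearMap.ker A.mulVecLin

/-- Entrywise nonnegativity of a matrix. -/
def Nonneg {n : ℕ} (M : Matrix (Fin n) (Fin n) ℝ) : Prop :=
  ∀ i j, 0 ≤ M i j

lemma eq_of_mulVec_eq {n : ℕ} {M N : Matrix (Fin n) (Fin n) ℝ}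
    (h : ∀ x, M *ᵥ x = N *ᵥ x) : M = N := by
  ext i j
  have := congrFun (h (Pi.single j 1)) i
  simpa using this

theorem proper_splitting_group_inv {n : ℕ} (A U V Ai : Matrix (Fin n) (Fin n) ℝ)
    (hs : ProperSplitting A U V) (hA : IsGroupInv A Ai) :
    ∃ Ui : Matrix (Fin n) (Fin n) ℝ,
      IsGroupInv U Ui ∧ A * Ai = U * Ui ∧ Ai * A = Ui * U := by
  obtain ⟨-, hrange, hker⟩ := hs
  obtain ⟨hA1, hA2, hA3⟩ := hA
  let P : Matrix (Fin n) (Fin n) ℝ := A * Ai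
  have hPdef : P = A * Ai := rfl
  have hP2 : P * P = P := by
    show A * Ai * (A * Ai) = A * Ai
    rw [← mul_assoc, hA1]
  have hAP : A * P = A := by
    show A * (A * Ai) = A
    calc A * (A * Ai) = A * (Ai * A) := by rw [hA3]
    _ = A * Ai * A := by rw [← mul_assoc]
    _ = A := hA1
  have hPA : P * A = A := hA1
  -- kernel transfer
  have hkerUA : ∀ x, A *ᵥ x = 0 → U *ᵥ x = 0 := by
    intro x hx
    have h1 : x ∈ LinearMap.ker A.mulVecLin := by simpa using hx
    rw [← hker] at h1
    simpa using h1
  have hkerAU : ∀ x, U *ᵥ x = 0 → A *ᵥ x = 0 := by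
    intro x hx
    have h1 : x ∈ LinearMap.ker U.mulVecLin := by simpa using hx
    rw [hker] at h1
    simpa using h1
  -- U * P = U
  have hUP : U * P = U := by
    apply eq_of_mulVec_eq
    intro x
    have hz : A *ᵥ ((P - 1) *ᵥ x) = 0 := by
      rw [Matrix.mulVec_mulVec, Matrix.mul_sub, hAP, mul_one, sub_self,
        Matrix.zero_mulVec]
    have hz2 := hkerUA _ hz
    rw [Matrix.mulVec_mulVec, Matrix.mul_sub, mul_one, Matrix.sub_mulVec,
      sub_eq_zero] at hz2
    rw [← hz2]
  -- P * U = U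
  have hPU : P * U = U := by
    apply eq_of_mulVec_eq
    intro x
    have hmem : U *ᵥ x ∈ LinearMap.range A.mulVecLin := by
      rw [← hrange]
      exact ⟨x, by simp⟩
    obtain ⟨y, hy⟩ := hmem
    simp only [Matrix.mulVecLin_apply] at hy
    rw [← Matrix.mulVec_mulVec, ← hy, Matrix.mulVec_mulVec, hPA]
  -- the auxiliary invertible matrix
  let X : Matrix (Fin n) (Fin n) ℝ := U + 1 - P
  have hXdef : X = U + 1 - P := rfl
  have hXinj : Function.Injective X.mulVec := by
    have h : ∀ z, X *ᵥ z = 0 → z = 0 := by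
      intro z hz
      have hzexp : U *ᵥ z + (z - P *ᵥ z) = 0 := by
        have he : X *ᵥ z = U *ᵥ z + z - P *ᵥ z := by
          rw [hXdef, Matrix.sub_mulVec, Matrix.add_mulVec, Matrix.one_mulVec]
        rw [he] at hz
        rw [← hz]; abel
      have hAw : A *ᵥ (z - P *ᵥ z) = 0 := by
        rw [Matrix.mulVec_sub, Matrix.mulVec_mulVec, hAP, sub_self]
      have hAu : A *ᵥ (U *ᵥ z) = 0 := by
        have he : U *ᵥ z = -(z - P *ᵥ z) := by
          rw [eq_neg_iff_add_eq_zero]; exact hzexp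
        rw [he, Matrix.mulVec_neg, hAw, neg_zero]
      have hPu : P *ᵥ (U *ᵥ z) = U *ᵥ z := by
        rw [Matrix.mulVec_mulVec, hPU]
      have hu0 : U *ᵥ z = 0 := by
        rw [← hPu, hPdef, hA3, ← Matrix.mulVec_mulVec, hAu, Matrix.mulVec_zero]
      have hAz : A *ᵥ z = 0 := hkerAU z hu0
      have hPz : P *ᵥ z = 0 := by
        rw [hPdef, hA3, ← Matrix.mulVec_mulVec, hAz, Matrix.mulVec_zero]
      have hw : z - P *ᵥ z = 0 := by
        have := hzexp
        rw [hu0] at this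
        simpa using this
      rw [hPz, sub_zero] at hw
      exact hw
    intro x y hxy
    have hd : X *ᵥ (x - y) = 0 := by
      rw [Matrix.mulVec_sub, hxy, sub_self]
    exact sub_eq_zero.mp (h _ hd)
  have hXunit : IsUnit X := Matrix.mulVec_injective_iff_isUnit.mp hXinj
  have hXdet : IsUnit X.det := (Matrix.isUnit_iff_isUnit_det X).mp hXunit
  have hXinv : X * X⁻¹ = 1 := Matrix.mul_nonsing_inv X hXdet
  have hinvX : X⁻¹ * X = 1 := Matrix.nonsing_inv_mul X hXdet
  have hXP : X * P = U := by
    rw [hXdef, Matrix.sub_mul, Matrix.add_mul, one_mul, hUP, hP2]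
    abel
  have hPX : P * X = U := by
    rw [hXdef, Matrix.mul_sub, Matrix.mul_add, mul_one, hPU, hP2]
    abel
  have hUXi : U * X⁻¹ = P := by
    rw [← hPX, mul_assoc, hXinv, mul_one]
  have hXiU : X⁻¹ * U = P := by
    rw [← hXP, ← mul_assoc, hinvX, one_mul]
  have hcomm : X⁻¹ * P = P * X⁻¹ := by
    calc X⁻¹ * P = X⁻¹ * P * (X * X⁻¹) := by rw [hXinv, mul_one]
    _ = X⁻¹ * (P * X) * X⁻¹ := by simp only [mul_assoc]
    _ = X⁻¹ * (X * P) * X⁻¹ := by rw [hPX, hXP]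
    _ = P * X⁻¹ := by rw [← mul_assoc, ← mul_assoc, hinvX, one_mul]
  have hUUi : U * (X⁻¹ * P) = P := by
    rw [← mul_assoc, hUXi, hP2]
  have hUiU : (X⁻¹ * P) * U = P := by
    rw [mul_assoc, hPU, hXiU]
  refine ⟨X⁻¹ * P, ⟨?_, ?_, ?_⟩, ?_, ?_⟩
  · rw [mul_assoc U, hUiU, hUP]
  · rw [hUiU, hcomm, ← mul_assoc, hP2]
  · rw [hUUi, hUiU]
  · rw [hUUi, hPdef]
  · rw [hUiU, hPdef, hA3]
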